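/- Let a < b be real numbers and let f and f_m (m = 1,2,…) be monotonically increasing right-continuous functions on ℝ that vanish for λ < a and are constant for λ ≥ b. Suppose that for every polynomial p, lim_{m→∞} ∫ p df_m = ∫ p df, where the integrals are Lebesgue–Stieltjes integrals. Define f̲(λ) = liminf_m f_m(λ), f̄(λ) = limsup_m f_m(λ), f̲⁺(λ) = lim_{ε→0⁺} f̲(λ+ε) and f̄⁺(λ) = lim_{ε→0⁺} f̄(λ+ε). Then f(λ) = f̲⁺(λ) = f̄⁺(λ) for all λ ∈ ℝ. In particular, f(λ) = lim_{m→∞} f_m(λ) at every point λ of continuity of f, hence at all but countably many λ. -/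

import Mathlib

open Filter

section WSC_Aux
open MeasureTheory Set

section basic
variable {a b : ℝ}

lemma wsc_atBot (g : StieltjesFunction ℝ) (hga : ∀ x : ℝ, x < a → g x = 0) :
    Tendsto g atBot (nhds 0) := by
  apply tendsto_const_nhds.congr'
  filter_upwards [eventually_le_atBot (a - 1)] with x hx
  exact (hga x (by linarith)).symm

lemma wsc_atTop (g : StieltjesFunction ℝ) (hgb : ∀ x : ℝ, b ≤ x → g x = g b) :
    Tendsto g atTop (nhds (g b)) := by
  apply tendsto_const_nhds.congr'
  filter_upwards [eventually_ge_atTop b] with x hx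
  exact (hgb x hx).symm

lemma wsc_nonneg (g : StieltjesFunction ℝ) (hga : ∀ x : ℝ, x < a → g x = 0) (x : ℝ) :
    0 ≤ g x := by
  rcases lt_or_ge x a with h | h
  · exact (hga x h).ge
  · rw [← hga (a - 1) (by linarith)]; exact g.mono (by linarith)

lemma wsc_le_b (g : StieltjesFunction ℝ) (hgb : ∀ x : ℝ, b ≤ x → g x = g b) (x : ℝ) :
    g x ≤ g b := by
  rcases le_or_gt b x with h | h
  · exact (hgb x h).le
  · exact g.mono h.le

lemma wsc_measure_Iic (g : StieltjesFunction ℝ) (hga : ∀ x : ℝ, x < a → g x = 0) (x : ℝ) :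
    g.measure (Iic x) = ENNReal.ofReal (g x) := by
  rw [g.measure_Iic (wsc_atBot g hga), sub_zero]

lemma wsc_finite (g : StieltjesFunction ℝ) (hga : ∀ x : ℝ, x < a → g x = 0)
    (hgb : ∀ x : ℝ, b ≤ x → g x = g b) : IsFiniteMeasure g.measure :=
  ⟨by rw [g.measure_univ (wsc_atBot g hga) (wsc_atTop g hgb)]; exact ENNReal.ofReal_lt_top⟩

lemma wsc_measure_univ (g : StieltjesFunction ℝ) (hga : ∀ x : ℝ, x < a → g x = 0)
    (hgb : ∀ x : ℝ, b ≤ x → g x = g b) : (g.measure Set.univ).toReal = g b := by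
  rw [g.measure_univ (wsc_atBot g hga) (wsc_atTop g hgb), sub_zero,
    ENNReal.toReal_ofReal (wsc_nonneg g hga b)]

lemma wsc_Iic_toReal (g : StieltjesFunction ℝ) (hga : ∀ x : ℝ, x < a → g x = 0) (x : ℝ) :
    (g.measure (Iic x)).toReal = g x := by
  rw [wsc_measure_Iic g hga, ENNReal.toReal_ofReal (wsc_nonneg g hga x)]

lemma wsc_compl_null (g : StieltjesFunction ℝ) (hga : ∀ x : ℝ, x < a → g x = 0)
    (hgb : ∀ x : ℝ, b ≤ x → g x = g b) : g.measure (Icc a b)ᶜ = 0 := by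
  have hsub : (Icc a b)ᶜ ⊆ Iio a ∪ Ioi b := by
    intro x hx
    simp only [Set.mem_compl_iff, Set.mem_Icc, not_and_or, not_le] at hx
    rcases hx with h | h
    · exact Or.inl h
    · exact Or.inr h
  refine measure_mono_null hsub (measure_union_null ?_ ?_)
  · refine measure_mono_null (fun x hx => ?_)
      (measure_iUnion_null (s := fun n : ℕ => Iic (a - 1/(n+1))) fun n => ?_)
    · obtain ⟨n, hn⟩ := exists_nat_one_div_lt (K := ℝ) (sub_pos.mpr hx)
      exact Set.mem_iUnion.mpr ⟨n, by simp only [Set.mem_Iic]; linarith [hn]⟩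
    · have h1 : (0:ℝ) < 1/(n+1) := by positivity
      rw [wsc_measure_Iic g hga, hga _ (by linarith)]
      simp
  · have hs : Ioi b ⊆ (Iic b)ᶜ := fun x hx => by simpa using hx
    refine measure_mono_null hs ?_
    have := wsc_finite g hga hgb
    rw [measure_compl measurableSet_Iic (measure_ne_top _ _), wsc_measure_Iic g hga,
      g.measure_univ (wsc_atBot g hga) (wsc_atTop g hgb), sub_zero, tsub_self]

lemma wsc_restrict (g : StieltjesFunction ℝ) (hga : ∀ x : ℝ, x < a → g x = 0)
    (hgb : ∀ x : ℝ, b ≤ x → g x = g b) : g.measure.restrict (Icc a b) = g.measure := by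
  refine Measure.restrict_eq_self_of_ae_mem ?_
  rw [ae_iff]
  have := wsc_compl_null g hga hgb
  convert this using 2
  rfl

lemma wsc_integrable (g : StieltjesFunction ℝ) (hga : ∀ x : ℝ, x < a → g x = 0)
    (hgb : ∀ x : ℝ, b ≤ x → g x = g b) {h : ℝ → ℝ} (hh : Continuous h) :
    Integrable h g.measure := by
  rw [← wsc_restrict g hga hgb]
  exact ContinuousOn.integrableOn_compact isCompact_Icc hh.continuousOn

end basic

section main
variable {a b : ℝ}

lemma wsc_ae_mem (g : StieltjesFunction ℝ) (hga : ∀ x : ℝ, x < a → g x = 0)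
    (hgb : ∀ x : ℝ, b ≤ x → g x = g b) : ∀ᵐ x ∂g.measure, x ∈ Icc a b := by
  rw [ae_iff]
  convert wsc_compl_null g hga hgb using 2
  rfl

lemma wsc_tendsto_integral (a b : ℝ) (hab : a < b)
    (f : StieltjesFunction ℝ) (F : ℕ → StieltjesFunction ℝ)
    (hfa : ∀ x : ℝ, x < a → f x = 0) (hfb : ∀ x : ℝ, b ≤ x → f x = f b)
    (hFa : ∀ (m : ℕ) (x : ℝ), x < a → F m x = 0)
    (hFb : ∀ (m : ℕ) (x : ℝ), b ≤ x → F m x = F m b)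
    (hpoly : ∀ P : Polynomial ℝ,
      Tendsto (fun m => ∫ x, P.eval x ∂(F m).measure) atTop
        (nhds (∫ x, P.eval x ∂f.measure)))
    (g : ℝ → ℝ) (hg : Continuous g) :
    Tendsto (fun m => ∫ x, g x ∂(F m).measure) atTop (nhds (∫ x, g x ∂f.measure)) := by
  have hfin : IsFiniteMeasure f.measure := wsc_finite f hfa hfb
  have hFfin : ∀ m, IsFiniteMeasure (F m).measure := fun m => wsc_finite (F m) (hFa m) (hFb m)
  -- masses
  have hmass : ∀ m, ((F m).measure Set.univ).toReal = F m b :=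
    fun m => wsc_measure_univ (F m) (hFa m) (hFb m)
  have h1 := hpoly (Polynomial.C 1)
  simp only [Polynomial.eval_C, MeasureTheory.integral_const, smul_eq_mul, mul_one] at h1
  obtain ⟨C, hC⟩ := (h1.bddAbove_range : BddAbove _)
  have hCb : ∀ m, F m b ≤ C := by
    intro m
    rw [← hmass m]
    exact hC ⟨m, rfl⟩
  set D : ℝ := max C ((f.measure Set.univ).toReal) + 1 with hD
  have hDpos : 0 < D := by
    have : 0 ≤ (f.measure Set.univ).toReal := ENNReal.toReal_nonneg
    have := le_max_right C ((f.measure Set.univ).toReal)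
    positivity
  have hmassD : ∀ m, ((F m).measure Set.univ).toReal ≤ D := by
    intro m
    rw [hmass m]
    calc F m b ≤ C := hCb m
    _ ≤ D := by rw [hD]; linarith [le_max_left C ((f.measure Set.univ).toReal)]
  have hfD : (f.measure Set.univ).toReal ≤ D := by
    rw [hD]; linarith [le_max_right C ((f.measure Set.univ).toReal)]
  rw [Metric.tendsto_atTop]
  intro ε hε
  set δ : ℝ := ε / (3 * D) with hδdef
  have hδ : 0 < δ := by positivity
  obtain ⟨P, hP⟩ := exists_polynomial_near_of_continuousOn a b g hg.continuousOn δ hδ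
  -- bound for any Stieltjes h with the support hyps
  have key : ∀ (h : StieltjesFunction ℝ), (∀ x : ℝ, x < a → h x = 0) →
      (∀ x : ℝ, b ≤ x → h x = h b) →
      ‖∫ x, g x ∂h.measure - ∫ x, P.eval x ∂h.measure‖ ≤ δ * (h.measure Set.univ).toReal := by
    intro h ha hb
    have hfin' : IsFiniteMeasure h.measure := wsc_finite h ha hb
    rw [← MeasureTheory.integral_sub (wsc_integrable h ha hb hg)
      (wsc_integrable h ha hb (Polynomial.continuous P))]
    refine MeasureTheory.norm_integral_le_of_norm_le_const ?_
    filter_upwards [wsc_ae_mem h ha hb] with x hx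
    rw [Real.norm_eq_abs, abs_sub_comm]
    exact (hP x hx).le
  have hmid := hpoly P
  rw [Metric.tendsto_atTop] at hmid
  obtain ⟨N, hN⟩ := hmid (ε/3) (by positivity)
  refine ⟨N, fun m hm => ?_⟩
  have e1 : ‖∫ x, g x ∂(F m).measure - ∫ x, P.eval x ∂(F m).measure‖ ≤ ε/3 := by
    calc _ ≤ δ * (((F m).measure Set.univ).toReal) := key (F m) (hFa m) (hFb m)
    _ ≤ δ * D := by nlinarith [hmassD m, hδ.le]
    _ = ε/3 := by rw [hδdef]; field_simp
  have e3 : ‖∫ x, g x ∂f.measure - ∫ x, P.eval x ∂f.measure‖ ≤ ε/3 := by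
    calc _ ≤ δ * ((f.measure Set.univ).toReal) := key f hfa hfb
    _ ≤ δ * D := by nlinarith [hfD, hδ.le]
    _ = ε/3 := by rw [hδdef]; field_simp
  have e2 := hN m hm
  rw [Real.dist_eq] at e2 ⊢
  rw [Real.norm_eq_abs] at e1 e3
  have := abs_sub_abs_le_abs_sub (∫ x, g x ∂(F m).measure) (∫ x, g x ∂f.measure)
  calc |∫ x, g x ∂(F m).measure - ∫ x, g x ∂f.measure|
      ≤ |∫ x, g x ∂(F m).measure - ∫ x, P.eval x ∂(F m).measure|
        + |∫ x, P.eval x ∂(F m).measure - ∫ x, P.eval x ∂f.measure|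
        + |∫ x, P.eval x ∂f.measure - ∫ x, g x ∂f.measure| := by
        have := abs_sub_le (∫ x, g x ∂(F m).measure) (∫ x, P.eval x ∂(F m).measure)
          (∫ x, g x ∂f.measure)
        have h2 := abs_sub_le (∫ x, P.eval x ∂(F m).measure) (∫ x, P.eval x ∂f.measure)
          (∫ x, g x ∂f.measure)
        linarith
  _ < ε := by
        rw [abs_sub_comm] at e3
        linarith

end main

section sandwich
variable {a b : ℝ}

lemma wsc_sandwich (h : StieltjesFunction ℝ) (ha : ∀ x : ℝ, x < a → h x = 0)
    (hb : ∀ x : ℝ, b ≤ x → h x = h b) (x y : ℝ) (hxy : x < y) :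
    h x ≤ ∫ t, max 0 (min 1 ((y - t)/(y - x))) ∂h.measure ∧
    ∫ t, max 0 (min 1 ((y - t)/(y - x))) ∂h.measure ≤ h y := by
  have hfin : IsFiniteMeasure h.measure := wsc_finite h ha hb
  set g : ℝ → ℝ := fun t => max 0 (min 1 ((y - t)/(y - x))) with hgdef
  have hgc : Continuous g := by
    apply continuous_const.max
    exact continuous_const.min ((continuous_const.sub continuous_id).div_const _)
  have hgint : Integrable g h.measure := wsc_integrable h ha hb hgc
  have hind : ∀ s : Set ℝ, MeasurableSet s → Integrable (s.indicator (fun _ => (1:ℝ))) h.measure :=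
    fun s hs => (integrable_indicator_iff hs).mpr ((integrableOn_const_iff).mpr (Or.inr (measure_ne_top _ _).lt_top))
  constructor
  · have : h x = ∫ t, Set.indicator (Iic x) (fun _ => (1:ℝ)) t ∂h.measure := by
      rw [MeasureTheory.integral_indicator_const (1:ℝ) measurableSet_Iic,
        smul_eq_mul, mul_one, measureReal_def, wsc_Iic_toReal h ha]
    rw [this]
    refine MeasureTheory.integral_mono (hind _ measurableSet_Iic) hgint (fun t => ?_)
    rcases le_or_gt t x with htx | htx
    · have h1 : (1:ℝ) ≤ (y - t)/(y - x) := by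
        rw [le_div_iff₀ (by linarith)]
        linarith
      simp only [Set.indicator_of_mem (Set.mem_Iic.mpr htx), hgdef]
      rw [min_eq_left h1]
      exact le_max_right 0 1
    · simp only [Set.indicator_of_notMem (by simpa using htx : t ∉ Iic x)]
      exact le_max_left 0 _
  · have : h y = ∫ t, Set.indicator (Iic y) (fun _ => (1:ℝ)) t ∂h.measure := by
      rw [MeasureTheory.integral_indicator_const (1:ℝ) measurableSet_Iic,
        smul_eq_mul, mul_one, measureReal_def, wsc_Iic_toReal h ha]
    rw [this]
    refine MeasureTheory.integral_mono hgint (hind _ measurableSet_Iic) (fun t => ?_)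
    rcases le_or_gt t y with hty | hty
    · simp only [Set.indicator_of_mem (Set.mem_Iic.mpr hty), hgdef]
      exact max_le (by norm_num) (min_le_left _ _)
    · simp only [Set.indicator_of_notMem (by simpa using hty : t ∉ Iic y), hgdef]
      have : (y - t)/(y - x) ≤ 0 := div_nonpos_of_nonpos_of_nonneg (by linarith) (by linarith)
      exact max_le le_rfl (le_trans (min_le_right _ _) this)

end sandwich

theorem weak_spectral_convergence_aux (a b : ℝ) (hab : a < b)
    (f : StieltjesFunction ℝ) (F : ℕ → StieltjesFunction ℝ)
    (hfa : ∀ x : ℝ, x < a → f x = 0) (hfb : ∀ x : ℝ, b ≤ x → f x = f b)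
    (hFa : ∀ (m : ℕ) (x : ℝ), x < a → F m x = 0)
    (hFb : ∀ (m : ℕ) (x : ℝ), b ≤ x → F m x = F m b)
    (hpoly : ∀ P : Polynomial ℝ,
      Tendsto (fun m => ∫ x, P.eval x ∂(F m).measure) atTop
        (nhds (∫ x, P.eval x ∂f.measure))) :
    (∀ lam : ℝ,
      Tendsto (fun ε : ℝ => liminf (fun m => F m (lam + ε)) atTop)
        (nhdsWithin 0 (Set.Ioi 0)) (nhds (f lam)) ∧
      Tendsto (fun ε : ℝ => limsup (fun m => F m (lam + ε)) atTop)
        (nhdsWithin 0 (Set.Ioi 0)) (nhds (f lam))) ∧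
    (∀ lam : ℝ, ContinuousAt (fun x => f x) lam →
      Tendsto (fun m => F m lam) atTop (nhds (f lam))) ∧
    {lam : ℝ | ¬ ContinuousAt (fun x => f x) lam}.Countable := by
  have hint := wsc_tendsto_integral a b hab f F hfa hfb hFa hFb hpoly
  -- boundedness of F m x
  have hF0 : ∀ m x, 0 ≤ F m x := fun m x => wsc_nonneg (F m) (hFa m) x
  have hbddbelow : ∀ x, IsBoundedUnder (· ≥ ·) atTop (fun m => F m x) :=
    fun x => isBoundedUnder_of ⟨0, fun m => hF0 m x⟩
  have h1 := hpoly (Polynomial.C 1)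
  simp only [Polynomial.eval_C, MeasureTheory.integral_const, smul_eq_mul, mul_one] at h1
  obtain ⟨C, hC⟩ := (h1.bddAbove_range : BddAbove _)
  have hCb : ∀ m x, F m x ≤ C := by
    intro m x
    calc F m x ≤ F m b := wsc_le_b (F m) (hFb m) x
    _ = ((F m).measure Set.univ).toReal := (wsc_measure_univ (F m) (hFa m) (hFb m)).symm
    _ ≤ C := hC ⟨m, rfl⟩
  have hbddabove : ∀ x, IsBoundedUnder (· ≤ ·) atTop (fun m => F m x) :=
    fun x => isBoundedUnder_of ⟨C, fun m => hCb m x⟩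
  -- key inequalities
  have hA : ∀ x y : ℝ, x < y → limsup (fun m => F m x) atTop ≤ f y := by
    intro x y hxy
    set g : ℝ → ℝ := fun t => max 0 (min 1 ((y - t)/(y - x))) with hgdef
    have hgc : Continuous g :=
      continuous_const.max (continuous_const.min
        ((continuous_const.sub continuous_id).div_const _))
    have htend := hint g hgc
    have hle : ∀ m, F m x ≤ ∫ t, g t ∂(F m).measure :=
      fun m => (wsc_sandwich (F m) (hFa m) (hFb m) x y hxy).1
    have hub : ∫ t, g t ∂f.measure ≤ f y := (wsc_sandwich f hfa hfb x y hxy).2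
    calc limsup (fun m => F m x) atTop
        ≤ limsup (fun m => ∫ t, g t ∂(F m).measure) atTop :=
          limsup_le_limsup (Eventually.of_forall hle)
            ((hbddbelow x).isCoboundedUnder_le) htend.isBoundedUnder_le
      _ = ∫ t, g t ∂f.measure := htend.limsup_eq
      _ ≤ f y := hub
  have hB : ∀ x y : ℝ, x < y → f x ≤ liminf (fun m => F m y) atTop := by
    intro x y hxy
    set g : ℝ → ℝ := fun t => max 0 (min 1 ((y - t)/(y - x))) with hgdef
    have hgc : Continuous g :=
      continuous_const.max (continuous_const.min
        ((continuous_const.sub continuous_id).div_const _))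
    have htend := hint g hgc
    have hle : ∀ m, ∫ t, g t ∂(F m).measure ≤ F m y :=
      fun m => (wsc_sandwich (F m) (hFa m) (hFb m) x y hxy).2
    have hlb : f x ≤ ∫ t, g t ∂f.measure := (wsc_sandwich f hfa hfb x y hxy).1
    calc f x ≤ ∫ t, g t ∂f.measure := hlb
      _ = liminf (fun m => ∫ t, g t ∂(F m).measure) atTop := htend.liminf_eq.symm
      _ ≤ liminf (fun m => F m y) atTop :=
          liminf_le_liminf (Eventually.of_forall hle) htend.isBoundedUnder_ge
            ((hbddabove y).isCoboundedUnder_ge)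
  have hinfsup : ∀ x : ℝ, liminf (fun m => F m x) atTop ≤ limsup (fun m => F m x) atTop :=
    fun x => liminf_le_limsup (hbddabove x) (hbddbelow x)
  refine ⟨fun lam => ?_, fun lam hcont => ?_, ?_⟩
  · -- right limits
    have hrc : Tendsto (fun ε : ℝ => f (lam + 2*ε)) (nhdsWithin 0 (Set.Ioi 0)) (nhds (f lam)) := by
      have h2 : Tendsto (fun ε : ℝ => lam + 2*ε) (nhdsWithin 0 (Set.Ioi 0))
          (nhdsWithin lam (Set.Ici lam)) := by
        apply tendsto_nhdsWithin_of_tendsto_nhds_of_eventually_within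
        · have : Tendsto (fun ε : ℝ => lam + 2*ε) (nhds 0) (nhds (lam + 2*0)) :=
            (tendsto_const_nhds.add (tendsto_id.const_mul 2))
          simpa using this.mono_left nhdsWithin_le_nhds
        · filter_upwards [self_mem_nhdsWithin] with ε (hε : (0:ℝ) < ε)
          simp only [Set.mem_Ici]
          linarith
      exact (f.right_continuous lam).tendsto.comp h2
    have hlow : ∀ᶠ ε : ℝ in nhdsWithin 0 (Set.Ioi 0),
        f lam ≤ liminf (fun m => F m (lam + ε)) atTop := by
      filter_upwards [self_mem_nhdsWithin] with ε (hε : (0:ℝ) < ε)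
      exact hB lam (lam + ε) (by linarith)
    have hhigh : ∀ᶠ ε : ℝ in nhdsWithin 0 (Set.Ioi 0),
        limsup (fun m => F m (lam + ε)) atTop ≤ f (lam + 2*ε) := by
      filter_upwards [self_mem_nhdsWithin] with ε (hε : (0:ℝ) < ε)
      exact hA (lam + ε) (lam + 2*ε) (by linarith)
    have hls : Tendsto (fun ε : ℝ => limsup (fun m => F m (lam + ε)) atTop)
        (nhdsWithin 0 (Set.Ioi 0)) (nhds (f lam)) := by
      refine tendsto_of_tendsto_of_tendsto_of_le_of_le' tendsto_const_nhds hrc ?_ hhigh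
      filter_upwards [hlow] with ε hε
      exact hε.trans (hinfsup (lam + ε))
    refine ⟨?_, hls⟩
    refine tendsto_of_tendsto_of_tendsto_of_le_of_le' tendsto_const_nhds hrc hlow ?_
    filter_upwards [hhigh] with ε hε
    exact (hinfsup (lam + ε)).trans hε
  · -- continuity points
    have hL : limsup (fun m => F m lam) atTop ≤ f lam := by
      have ht : Tendsto f (nhdsWithin lam (Set.Ioi lam)) (nhds (f lam)) :=
        (hcont.continuousWithinAt).tendsto
      refine ge_of_tendsto ht ?_
      filter_upwards [self_mem_nhdsWithin] with y (hy : lam < y)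
      exact hA lam y hy
    have hl : f lam ≤ liminf (fun m => F m lam) atTop := by
      have ht : Tendsto f (nhdsWithin lam (Set.Iio lam)) (nhds (f lam)) :=
        (hcont.continuousWithinAt).tendsto
      refine le_of_tendsto ht ?_
      filter_upwards [self_mem_nhdsWithin] with x (hx : x < lam)
      exact hB x lam hx
    have heq1 : liminf (fun m => F m lam) atTop = f lam :=
      le_antisymm ((hinfsup lam).trans hL) hl
    have heq2 : limsup (fun m => F m lam) atTop = f lam :=
      le_antisymm hL (hl.trans (hinfsup lam))
    exact tendsto_of_liminf_eq_limsup heq1 heq2 (hbddabove lam) (hbddbelow lam)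
  · exact Countable.mono (fun x hx => hx) f.mono.countable_not_continuousAt

end WSC_Aux

/-- **Weak spectral convergence from convergence of polynomial moments.** Let `f` and
`f_m` be monotone increasing right-continuous functions (Stieltjes functions) vanishing
on `(−∞,a)` and constant on `[b,∞)`, and suppose `∫ p df_m → ∫ p df` for every
polynomial `p` (Lebesgue–Stieltjes integrals). Then `f(λ) = f̲⁺(λ) = f̄⁺(λ)` for every
`λ` (the right limits at `λ` of `liminf_m f_m` and `limsup_m f_m` both exist and equal
`f(λ)`); in particular `f_m(λ) → f(λ)` at every continuity point of `f`, hence at all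
but countably many `λ`. -/
theorem weak_spectral_convergence (a b : ℝ) (hab : a < b)
    (f : StieltjesFunction ℝ) (F : ℕ → StieltjesFunction ℝ)
    (hfa : ∀ x : ℝ, x < a → f x = 0) (hfb : ∀ x : ℝ, b ≤ x → f x = f b)
    (hFa : ∀ (m : ℕ) (x : ℝ), x < a → F m x = 0)
    (hFb : ∀ (m : ℕ) (x : ℝ), b ≤ x → F m x = F m b)
    (hpoly : ∀ P : Polynomial ℝ,
      Tendsto (fun m => ∫ x, P.eval x ∂(F m).measure) atTop
        (nhds (∫ x, P.eval x ∂f.measure))) :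
    (∀ lam : ℝ,
      Tendsto (fun ε : ℝ => liminf (fun m => F m (lam + ε)) atTop)
        (nhdsWithin 0 (Set.Ioi 0)) (nhds (f lam)) ∧
      Tendsto (fun ε : ℝ => limsup (fun m => F m (lam + ε)) atTop)
        (nhdsWithin 0 (Set.Ioi 0)) (nhds (f lam))) ∧
    (∀ lam : ℝ, ContinuousAt (fun x => f x) lam →
      Tendsto (fun m => F m lam) atTop (nhds (f lam))) ∧
    {lam : ℝ | ¬ ContinuousAt (fun x => f x) lam}.Countable := by
  exact weak_spectral_convergence_aux a b hab f F hfa hfb hFa hFb hpoly
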